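/- Limit ratio of KL and QKL: for a fixed probability distribution p on a finite set with full support, as q → p (with q a full-support distribution on the same set), the ratio D_KL(p‖q)/D_QKL(p‖q) → 1, where D_QKL(p‖q) = Σ_x p(x)·½(ln p(x) − ln q(x))². Consequently, for every δ > 0 there exists ε > 0 such that D_QKL(p‖q) ≤ ε and q ≠ p imply |D_KL(p‖q)/D_QKL(p‖q) − 1| ≤ δ. -/
import Mathlib


open Filter

lemma exp_taylor3 {v : ℝ} (hv : |v| ≤ 1) :
    |Real.exp v - (1 + v + v ^ 2 / 2)| ≤ (2 / 9) * |v| ^ 3 := by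
  have h := Real.exp_bound hv (n := 3) (by norm_num)
  simp [Finset.sum_range_succ, Nat.factorial] at h
  nlinarith [abs_nonneg v, pow_nonneg (abs_nonneg v) 3]

lemma key_ratio {S : Type*} [Fintype S] (p q : S → ℝ)
    (hp : ∀ x, 0 < p x) (hps : ∑ x, p x = 1)
    (hq : ∀ x, 0 < q x) (hqs : ∑ x, q x = 1) (hne : q ≠ p)
    (t : ℝ) (ht1 : t ≤ 1)
    (hu : ∀ x, |Real.log (p x) - Real.log (q x)| ≤ t) :
    |(∑ x, p x * Real.log (p x / q x)) /
        (∑ x, p x * ((1 / 2) * (Real.log (p x) - Real.log (q x)) ^ 2)) - 1| ≤ (4 / 9) * t := by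
  set u : S → ℝ := fun x => Real.log (p x) - Real.log (q x) with hu_def
  have hlogdiv : ∀ x, Real.log (p x / q x) = u x := fun x =>
    Real.log_div (hp x).ne' (hq x).ne'
  set KL : ℝ := ∑ x, p x * Real.log (p x / q x) with hKL
  set Q : ℝ := ∑ x, p x * ((1 / 2) * u x ^ 2) with hQ
  clear_value u KL Q
  have hu' : ∀ x, |u x| ≤ t := fun x => by simpa [hu_def] using hu x
  -- Q > 0
  obtain ⟨x₀, hx₀⟩ : ∃ x, q x ≠ p x := by
    by_contra h
    push_neg at h
    exact hne (funext h)
  have hux₀ : u x₀ ≠ 0 := by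
    intro h
    apply hx₀
    have hlog : Real.log (p x₀) = Real.log (q x₀) := by
      simpa [hu_def, sub_eq_zero] using h
    have hiff := Real.log_injOn_pos.eq_iff (Set.mem_Ioi.mpr (hp x₀)) (Set.mem_Ioi.mpr (hq x₀))
    exact (hiff.mp hlog).symm
  have hQpos : 0 < Q := by
    rw [hQ]
    refine Finset.sum_pos' (fun x _ => mul_nonneg (hp x).le (by positivity))
      ⟨x₀, Finset.mem_univ x₀, ?_⟩
    have hsq : 0 < u x₀ ^ 2 :=
      lt_of_le_of_ne (sq_nonneg _) (Ne.symm (pow_ne_zero 2 hux₀))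
    exact mul_pos (hp x₀) (mul_pos (by norm_num) hsq)
  -- q x = p x * exp (-(u x))
  have hqx : ∀ x, q x = p x * Real.exp (-(u x)) := by
    intro x
    rw [hu_def]
    simp only [neg_sub, Real.exp_sub, Real.exp_log (hp x), Real.exp_log (hq x)]
    rw [mul_div_assoc', mul_comm (p x) (q x), mul_div_assoc, div_self (hp x).ne', mul_one]
  -- KL = ∑ p x * (u x - 1 + exp (-(u x)))
  have hKL' : KL = ∑ x, p x * (u x - 1 + Real.exp (-(u x))) := by
    have h0 : ∑ x, p x * (Real.exp (-(u x)) - 1) = 0 := by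
      have : ∀ x, p x * (Real.exp (-(u x)) - 1) = q x - p x := by
        intro x; rw [hqx x]; ring
      simp only [this, Finset.sum_sub_distrib, hps, hqs, sub_self]
    rw [hKL]
    simp only [hlogdiv]
    rw [← add_zero (∑ x, p x * u x), ← h0, ← Finset.sum_add_distrib]
    congr 1; funext x; ring
  -- termwise bound
  have hterm : ∀ x, |p x * (u x - 1 + Real.exp (-(u x))) - p x * ((1 / 2) * u x ^ 2)|
      ≤ (4 / 9) * t * (p x * ((1 / 2) * u x ^ 2)) := by
    intro x
    have hvt : |(-(u x))| ≤ 1 := by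
      rw [abs_neg]; exact (hu' x).trans ht1
    have h3 := exp_taylor3 hvt
    have habs : |u x| ≤ t := hu' x
    have h4 : |u x| ^ 3 ≤ t * u x ^ 2 := by
      calc |u x| ^ 3 = |u x| * |u x| ^ 2 := by ring
        _ ≤ t * u x ^ 2 := by
            rw [sq_abs]
            exact mul_le_mul_of_nonneg_right habs (by positivity)
    have hpx := (hp x).le
    have heq : u x - 1 + Real.exp (-(u x)) - (1 / 2) * u x ^ 2
        = Real.exp (-(u x)) - (1 + (-(u x)) + (-(u x)) ^ 2 / 2) := by ring
    calc |p x * (u x - 1 + Real.exp (-(u x))) - p x * ((1 / 2) * u x ^ 2)|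
        = p x * |u x - 1 + Real.exp (-(u x)) - (1 / 2) * u x ^ 2| := by
          rw [← mul_sub, abs_mul, abs_of_nonneg hpx]
      _ ≤ p x * ((2 / 9) * |(-(u x))| ^ 3) := by
          apply mul_le_mul_of_nonneg_left _ hpx
          rw [heq]; exact h3
      _ ≤ (4 / 9) * t * (p x * ((1 / 2) * u x ^ 2)) := by
          rw [abs_neg]
          nlinarith [mul_le_mul_of_nonneg_left h4 hpx, hpx, sq_nonneg (u x)]
  have hsum : |KL - Q| ≤ (4 / 9) * t * Q := by
    rw [hKL', hQ, ← Finset.sum_sub_distrib]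
    calc |∑ x, (p x * (u x - 1 + Real.exp (-(u x))) - p x * ((1 / 2) * u x ^ 2))|
        ≤ ∑ x, |p x * (u x - 1 + Real.exp (-(u x))) - p x * ((1 / 2) * u x ^ 2)| :=
          Finset.abs_sum_le_sum_abs _ _
      _ ≤ ∑ x, (4 / 9) * t * (p x * ((1 / 2) * u x ^ 2)) :=
          Finset.sum_le_sum fun x _ => hterm x
      _ = (4 / 9) * t * ∑ x, p x * ((1 / 2) * u x ^ 2) := by rw [← Finset.mul_sum]
  have hfinal : KL / Q - 1 = (KL - Q) / Q := by field_simp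
  rw [hfinal, abs_div, abs_of_pos hQpos, div_le_iff₀ hQpos]
  exact hsum

lemma abs_log_le_two_mul {y : ℝ} (hy : 1 / 2 ≤ y) : |Real.log y| ≤ 2 * |y - 1| := by
  have hy0 : 0 < y := by linarith
  rcases le_or_gt 1 y with h | h
  · rw [abs_of_nonneg (Real.log_nonneg h), abs_of_nonneg (by linarith)]
    linarith [Real.log_le_sub_one_of_pos hy0]
  · rw [abs_of_nonpos (Real.log_nonpos hy0.le h.le), abs_of_neg (by linarith)]
    have h1 : Real.log y⁻¹ ≤ y⁻¹ - 1 := Real.log_le_sub_one_of_pos (by positivity)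
    rw [Real.log_inv] at h1
    have h2 : y⁻¹ - 1 ≤ 2 * (1 - y) := by
      have hc := mul_inv_cancel₀ hy0.ne'
      nlinarith [mul_nonneg (by linarith : (0:ℝ) ≤ 2 * y - 1) (by linarith : (0:ℝ) ≤ 1 - y)]
    linarith

/-- Limit ratio of KL and QKL: for a fixed full-support distribution `p` on a finite
set, as `q → p` through full-support distributions distinct from `p`, the ratio
`D_KL(p‖q)/D_QKL(p‖q) → 1`. Consequently, for every `δ > 0` there exists `ε > 0`
such that `D_QKL(p‖q) ≤ ε` and `q ≠ p` imply `|D_KL(p‖q)/D_QKL(p‖q) − 1| ≤ δ`. -/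
theorem kl_qkl_ratio_tendsto_one
    {S : Type*} [Fintype S] [Nonempty S] (p : S → ℝ)
    (hp : ∀ x, 0 < p x) (hps : ∑ x, p x = 1) :
    Tendsto (fun q : S → ℝ =>
        (∑ x, p x * Real.log (p x / q x)) /
          (∑ x, p x * ((1 / 2) * (Real.log (p x) - Real.log (q x)) ^ 2)))
      (nhdsWithin p {q : S → ℝ | (∀ x, 0 < q x) ∧ (∑ x, q x = 1) ∧ q ≠ p})
      (nhds 1) ∧
    ∀ δ > (0 : ℝ), ∃ ε > (0 : ℝ), ∀ q : S → ℝ,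
      (∀ x, 0 < q x) → (∑ x, q x = 1) →
      (∑ x, p x * ((1 / 2) * (Real.log (p x) - Real.log (q x)) ^ 2)) ≤ ε → q ≠ p →
      |(∑ x, p x * Real.log (p x / q x)) /
          (∑ x, p x * ((1 / 2) * (Real.log (p x) - Real.log (q x)) ^ 2)) - 1| ≤ δ := by
  set m : ℝ := Finset.univ.inf' Finset.univ_nonempty p with hm_def
  have hm : ∀ x, m ≤ p x := fun x => Finset.inf'_le _ (Finset.mem_univ x)
  have hm0 : 0 < m := by
    obtain ⟨x, -, hx⟩ := Finset.exists_mem_eq_inf' Finset.univ_nonempty p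
    rw [hm_def, hx]; exact hp x
  constructor
  · rw [Metric.tendsto_nhdsWithin_nhds]
    intro ε hε
    set t : ℝ := min 1 ε with ht_def
    have ht0 : 0 < t := lt_min one_pos hε
    have ht1 : t ≤ 1 := min_le_left _ _
    refine ⟨min (m / 2) (t * m / 4),
      lt_min (half_pos hm0) (div_pos (mul_pos ht0 hm0) (by norm_num)), ?_⟩
    intro q hqmem hdist
    obtain ⟨hq1, hq2, hq3⟩ := hqmem
    have hu : ∀ x, |Real.log (p x) - Real.log (q x)| ≤ t := by
      intro x
      have hd : |q x - p x| < min (m / 2) (t * m / 4) := by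
        have h := dist_le_pi_dist q p x
        rw [Real.dist_eq] at h
        exact lt_of_le_of_lt h hdist
      have hd1 : |q x - p x| < m / 2 := lt_of_lt_of_le hd (min_le_left _ _)
      have hd2 : |q x - p x| < t * m / 4 := lt_of_lt_of_le hd (min_le_right _ _)
      have hpx := hp x
      have hmx := hm x
      have habs := abs_lt.mp hd1
      have hy : 1 / 2 ≤ q x / p x := by
        rw [le_div_iff₀ hpx]
        nlinarith [habs.1]
      have hlog := abs_log_le_two_mul hy
      rw [Real.log_div (hq1 x).ne' hpx.ne'] at hlog
      rw [abs_sub_comm]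
      have heq : q x / p x - 1 = (q x - p x) / p x := by field_simp
      rw [heq, abs_div, abs_of_pos hpx] at hlog
      have h5 : |q x - p x| ≤ t * p x / 4 := by
        nlinarith [hd2.le, mul_nonneg ht0.le (sub_nonneg.mpr hmx)]
      have h6 : |q x - p x| / p x ≤ t / 4 := by
        rw [div_le_iff₀ hpx]
        nlinarith [h5]
      linarith [hlog, h6, ht0.le]
    have hkey := key_ratio p q hp hps hq1 hq2 hq3 t ht1 hu
    rw [Real.dist_eq]
    refine lt_of_le_of_lt hkey ?_
    have : t ≤ ε := min_le_right _ _
    linarith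
  · intro δ hδ
    set t : ℝ := min 1 δ with ht_def
    have ht0 : 0 < t := lt_min one_pos hδ
    have ht1 : t ≤ 1 := min_le_left _ _
    refine ⟨m * t ^ 2 / 2, by positivity, ?_⟩
    intro q hq1 hq2 hQle hne
    have hu : ∀ x, |Real.log (p x) - Real.log (q x)| ≤ t := by
      intro x
      have hsingle : p x * ((1 / 2) * (Real.log (p x) - Real.log (q x)) ^ 2)
          ≤ ∑ y, p y * ((1 / 2) * (Real.log (p y) - Real.log (q y)) ^ 2) :=
        Finset.single_le_sum (f := fun y => p y * ((1 / 2) * (Real.log (p y) - Real.log (q y)) ^ 2))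
          (fun y _ => mul_nonneg (hp y).le (by positivity)) (Finset.mem_univ x)
      have hle := hsingle.trans hQle
      have hsq : (Real.log (p x) - Real.log (q x)) ^ 2 ≤ t ^ 2 := by
        nlinarith [hp x, hm x, sq_nonneg (Real.log (p x) - Real.log (q x)), sq_nonneg t]
      exact abs_le_of_sq_le_sq hsq ht0.le
    have hkey := key_ratio p q hp hps hq1 hq2 hne t ht1 hu
    refine hkey.trans ?_
    have : t ≤ δ := min_le_right _ _
    linarith
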